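/- In the Q-MAC setup, for any decoder with side information g : ((ZMod 2)²)ⁿ × C₂ → C₁, if ε = P[g(Y, X⁽²⁾) ≠ X⁽¹⁾], then (1 − ε) · log |C₁| ≤ n · (log 2 − H_P(Δ⁽¹⁾ | Δ⁽²⁾)) + log 2, where H_P(Δ⁽¹⁾ | Δ⁽²⁾) is the conditional Shannon entropy, under a single draw (Δ⁽¹⁾, Δ⁽²⁾) ∼ P, of the first coordinate given the second. (This is the finite-blocklength form of the necessary condition R₁ ≤ I[X₀⁽¹⁾; X₀⁽²⁾, Y₀].) -/

import Mathlib

open MeasureTheory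

/-- Shannon entropy (in nats) of a random variable `X` taking values in a finite type,
`H[X] = ∑ s, (-P[X = s]) * log P[X = s]`. -/
noncomputable def entropy {Ω S : Type*} [MeasurableSpace Ω] [Fintype S]
    (μ : Measure Ω) (X : Ω → S) : ℝ :=
  ∑ s : S, Real.negMulLog (μ (X ⁻¹' {s})).toReal

/-- Conditional Shannon entropy (in nats), `H[X | Z] = H[(X, Z)] - H[Z]` (chain rule). -/
noncomputable def condEntropy {Ω S T : Type*} [MeasurableSpace Ω] [Fintype S] [Fintype T]
    (μ : Measure Ω) (X : Ω → S) (Z : Ω → T) : ℝ :=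
  entropy μ (fun ω => (X ω, Z ω)) - entropy μ Z

/-- Shannon entropy (in nats) of a probability distribution on a finite type. -/
noncomputable def distEntropy {S : Type*} [Fintype S] (P : PMF S) : ℝ :=
  ∑ s : S, Real.negMulLog (P s).toReal

/-- Conditional Shannon entropy (in nats), under a single draw `(Δ⁽¹⁾, Δ⁽²⁾) ∼ P`, of the
first coordinate given the second: `H_P(Δ⁽¹⁾ | Δ⁽²⁾) = H_P - H_P(Δ⁽²⁾)`. -/
noncomputable def distCondEntropyFst (P : PMF (ZMod 2 × ZMod 2)) : ℝ :=
  distEntropy P - ∑ b : ZMod 2, Real.negMulLog (∑ a : ZMod 2, P (a, b)).toReal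

open Finset

/-- Gibbs' inequality for (sub)probability vectors on a finite type. -/
private lemma gibbs_aux {ι : Type*} [Fintype ι] (p q : ι → ℝ)
    (hp : ∀ i, 0 ≤ p i) (hq : ∀ i, 0 ≤ q i)
    (hpos : ∀ i, 0 < p i → 0 < q i)
    (hsum : ∑ i, q i ≤ ∑ i, p i) :
    ∑ i, p i * (Real.log (q i) - Real.log (p i)) ≤ 0 := by
  have h : ∀ i, p i * (Real.log (q i) - Real.log (p i)) ≤ q i - p i := by
    intro i
    rcases eq_or_lt_of_le (hp i) with h0 | h0
    · simp [← h0, hq i]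
    · have hqi := hpos i h0
      have hlog : Real.log (q i) - Real.log (p i) = Real.log (q i / p i) :=
        (Real.log_div (ne_of_gt hqi) (ne_of_gt h0)).symm
      rw [hlog]
      have h1 := Real.log_le_sub_one_of_pos (div_pos hqi h0)
      have h2 : p i * Real.log (q i / p i) ≤ p i * (q i / p i - 1) := by nlinarith
      have h3 : p i * (q i / p i - 1) = q i - p i := by field_simp
      linarith
  calc ∑ i, p i * (Real.log (q i) - Real.log (p i)) ≤ ∑ i, (q i - p i) :=
        Finset.sum_le_sum (fun i _ => h i)
    _ ≤ 0 := by rw [Finset.sum_sub_distrib]; linarith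

private lemma sum_pi_prod {S : Type*} [Fintype S] {n : ℕ} (f : Fin n → S → ℝ) :
    ∑ d : Fin n → S, ∏ i, f i (d i) = ∏ i, ∑ s, f i s := by
  classical
  rw [Finset.prod_univ_sum]
  rw [Fintype.piFinset_univ]

private lemma tensor_sum {S : Type*} [Fintype S] {n : ℕ} (w ψ : S → ℝ) (hw : ∑ s, w s = 1) :
    ∑ d : Fin n → S, (∏ i, w (d i)) * (∑ j, ψ (d j)) = (n : ℝ) * ∑ s, w s * ψ s := by
  classical
  have key : ∀ d : Fin n → S, (∏ i, w (d i)) * (∑ j, ψ (d j))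
      = ∑ j, ∏ i, (w (d i) * if i = j then ψ (d i) else 1) := by
    intro d
    rw [Finset.mul_sum]
    refine Finset.sum_congr rfl fun j _ => ?_
    rw [Finset.prod_mul_distrib, Finset.prod_ite_eq' Finset.univ j (fun i => ψ (d i))]
    simp
  calc ∑ d : Fin n → S, (∏ i, w (d i)) * (∑ j, ψ (d j))
      = ∑ d : Fin n → S, ∑ j, ∏ i, (w (d i) * if i = j then ψ (d i) else 1) :=
        Finset.sum_congr rfl (fun d _ => key d)
    _ = ∑ j : Fin n, ∑ d : Fin n → S, ∏ i, (w (d i) * if i = j then ψ (d i) else 1) :=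
        Finset.sum_comm
    _ = ∑ _j : Fin n, ∑ s, w s * ψ s := by
        refine Finset.sum_congr rfl fun j _ => ?_
        rw [sum_pi_prod (fun i s => w s * if i = j then ψ s else 1)]
        have h1 : ∀ i : Fin n, (∑ s, w s * if i = j then ψ s else 1)
            = if i = j then ∑ s, w s * ψ s else 1 := by
          intro i; split <;> simp [hw]
        rw [Finset.prod_congr rfl (fun i _ => h1 i),
          Finset.prod_ite_eq' Finset.univ j (fun _ => ∑ s, w s * ψ s)]
        simp
    _ = (n : ℝ) * ∑ s, w s * ψ s := by
        rw [Finset.sum_const]; simp [nsmul_eq_mul]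


set_option maxHeartbeats 2000000

/-- Q-MAC setup with any side-information decoder
`g : ((ZMod 2)²)ⁿ × C₂ → C₁`: if `ε = P[g(Y, X⁽²⁾) ≠ X⁽¹⁾]`, then
`(1 - ε) · log |C₁| ≤ n · (log 2 - H_P(Δ⁽¹⁾ | Δ⁽²⁾)) + log 2`, the finite-blocklength form of
the condition `R₁ ≤ I[X₀⁽¹⁾; X₀⁽²⁾, Y₀]`. -/
theorem stmt_13 {Ω : Type*} [MeasurableSpace Ω] (μ : Measure Ω) [IsProbabilityMeasure μ]
    (n : ℕ) (P : PMF (ZMod 2 × ZMod 2))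
    (C₁ C₂ : Submodule (ZMod 2) (Fin n → ZMod 2))
    (X1 X2 : Ω → Fin n → ZMod 2) (Δ : Ω → Fin n → ZMod 2 × ZMod 2)
    (Y : Ω → Fin n → ZMod 2 × ZMod 2)
    (hX1m : ∀ c, MeasurableSet (X1 ⁻¹' {c}))
    (hX2m : ∀ c, MeasurableSet (X2 ⁻¹' {c}))
    (hΔm : ∀ d, MeasurableSet (Δ ⁻¹' {d}))
    (hX1mem : ∀ ω, X1 ω ∈ C₁) (hX2mem : ∀ ω, X2 ω ∈ C₂)
    (hX1 : ∀ c ∈ C₁, μ (X1 ⁻¹' {c}) = (Nat.card C₁ : ENNReal)⁻¹)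
    (hX2 : ∀ c ∈ C₂, μ (X2 ⁻¹' {c}) = (Nat.card C₂ : ENNReal)⁻¹)
    (hΔ : ∀ d, μ (Δ ⁻¹' {d}) = ∏ i, P (d i))
    (hindep : ∀ c₁ c₂ d, μ {ω | X1 ω = c₁ ∧ X2 ω = c₂ ∧ Δ ω = d}
      = μ (X1 ⁻¹' {c₁}) * μ (X2 ⁻¹' {c₂}) * μ (Δ ⁻¹' {d}))
    (hY : ∀ ω i, Y ω i = (X1 ω i, X2 ω i) + Δ ω i)
    (g : (Fin n → ZMod 2 × ZMod 2) × C₂ → C₁) (ε : ℝ)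
    (hε : ε = (μ {ω | (g (Y ω, ⟨X2 ω, hX2mem ω⟩) : Fin n → ZMod 2) ≠ X1 ω}).toReal) :
    (1 - ε) * Real.log (Nat.card C₁)
      ≤ n * (Real.log 2 - distCondEntropyFst P) + Real.log 2 := by
  classical
  haveI : Fintype ↥C₁ := Fintype.ofFinite _
  haveI : Fintype ↥C₂ := Fintype.ofFinite _
  haveI : Nonempty ↥C₁ := ⟨⟨0, C₁.zero_mem⟩⟩
  haveI : Nonempty ↥C₂ := ⟨⟨0, C₂.zero_mem⟩⟩
  set M : ℕ := Nat.card ↥C₁ with hMdef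
  set N : ℕ := Nat.card ↥C₂ with hNdef
  have hM : 0 < M := Nat.card_pos
  have hN : 0 < N := Nat.card_pos
  have hMcard : Fintype.card ↥C₁ = M := Nat.card_eq_fintype_card.symm
  have hNcard : Fintype.card ↥C₂ = N := Nat.card_eq_fintype_card.symm
  -- basic real quantities
  set w : ZMod 2 × ZMod 2 → ℝ := fun s => (P s).toReal with hwdef
  set r : (Fin n → ZMod 2 × ZMod 2) → ℝ := fun d => ∏ i, w (d i) with hrdef
  set P2 : ZMod 2 → ℝ := fun b => ∑ a, w (a, b) with hP2def
  have hw_nonneg : ∀ s, 0 ≤ w s := fun s => ENNReal.toReal_nonneg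
  have hw_sum : ∑ s, w s = 1 := by
    have h1 : ∑ s, P s = 1 := by rw [← tsum_fintype (L := .unconditional _)]; exact P.tsum_coe
    have h2 := ENNReal.toReal_sum (s := Finset.univ) (f := fun s : ZMod 2 × ZMod 2 => P s)
      (fun a _ => P.apply_ne_top a)
    rw [h1] at h2; simpa [hwdef] using h2.symm
  have hr_nonneg : ∀ d, 0 ≤ r d := fun d => Finset.prod_nonneg (fun i _ => hw_nonneg _)
  have hr_sum : ∑ d, r d = 1 := by
    rw [hrdef]
    rw [sum_pi_prod (fun _ s => w s)]
    simp [hw_sum]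
  have hP2_nonneg : ∀ b, 0 ≤ P2 b := fun b => Finset.sum_nonneg (fun a _ => hw_nonneg _)
  have hP2_sum : ∑ b, P2 b = 1 := by
    rw [hP2def, ← hw_sum, Fintype.sum_prod_type]
    exact Finset.sum_comm
  have hP2_ge : ∀ s : ZMod 2 × ZMod 2, w s ≤ P2 s.2 := by
    intro s
    calc w s = w (s.1, s.2) := by rw [Prod.mk.eta]
      _ ≤ ∑ a, w (a, s.2) := Finset.single_le_sum (f := fun a => w (a, s.2)) (fun a _ => hw_nonneg _) (mem_univ s.1)
  -- the error predicate and p, q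
  set err : ↥C₁ × ↥C₂ × (Fin n → ZMod 2 × ZMod 2) → Prop :=
    fun t => (g ((fun i => ((t.1 : Fin n → ZMod 2) i, (t.2.1 : Fin n → ZMod 2) i) + t.2.2 i),
      t.2.1) : Fin n → ZMod 2) ≠ (t.1 : Fin n → ZMod 2) with herrdef
  set p : ↥C₁ × ↥C₂ × (Fin n → ZMod 2 × ZMod 2) → ℝ :=
    fun t => (M : ℝ)⁻¹ * (N : ℝ)⁻¹ * r t.2.2 with hpdef
  set q : ↥C₁ × ↥C₂ × (Fin n → ZMod 2 × ZMod 2) → ℝ :=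
    fun t => (N : ℝ)⁻¹ * (if err t then (2 * M : ℝ)⁻¹ else (2 : ℝ)⁻¹)
      * ∏ i, ((2 : ℝ)⁻¹ * P2 ((t.2.2 i).2)) with hqdef
  -- ε as a finite sum
  have hεsum : ε = ∑ t, (if err t then p t else 0) := by
    set cell : ↥C₁ × ↥C₂ × (Fin n → ZMod 2 × ZMod 2) → Set Ω :=
      fun t => X1 ⁻¹' {(t.1 : Fin n → ZMod 2)} ∩ X2 ⁻¹' {(t.2.1 : Fin n → ZMod 2)}
        ∩ Δ ⁻¹' {t.2.2} with hcelldef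
    have hcellm : ∀ t, MeasurableSet (cell t) :=
      fun t => ((hX1m _).inter (hX2m _)).inter (hΔm _)
    have hcellμ : ∀ t, μ (cell t) = (M : ENNReal)⁻¹ * (N : ENNReal)⁻¹ * ∏ i, P (t.2.2 i) := by
      intro t
      have h1 : cell t = {ω | X1 ω = ↑t.1 ∧ X2 ω = ↑t.2.1 ∧ Δ ω = t.2.2} := by
        ext ω; simp [hcelldef, Set.mem_inter_iff, and_assoc]
      rw [h1, hindep, hX1 _ t.1.2, hX2 _ t.2.1.2, hΔ]
    have hdisj : Set.PairwiseDisjoint (↑(Finset.univ.filter err) :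
        Set (↥C₁ × ↥C₂ × (Fin n → ZMod 2 × ZMod 2))) cell := by
      intro t _ t' _ hne
      rw [Function.onFun, Set.disjoint_left]
      intro ω hω hω'
      simp only [hcelldef, Set.mem_inter_iff, Set.mem_preimage, Set.mem_singleton_iff] at hω hω'
      exact hne (by
        obtain ⟨⟨a1, a2⟩, a3⟩ := hω
        obtain ⟨⟨b1, b2⟩, b3⟩ := hω'
        refine Prod.ext (Subtype.ext ?_) (Prod.ext (Subtype.ext ?_) ?_)
        · rw [← a1, ← b1]
        · rw [← a2, ← b2]
        · rw [← a3, ← b3])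
    have hE : {ω | (g (Y ω, ⟨X2 ω, hX2mem ω⟩) : Fin n → ZMod 2) ≠ X1 ω}
        = ⋃ t ∈ Finset.univ.filter err, cell t := by
      ext ω
      simp only [Set.mem_setOf_eq, Set.mem_iUnion, Finset.mem_filter, Finset.mem_univ, true_and,
        exists_prop]
      constructor
      · intro hωe
        refine ⟨(⟨X1 ω, hX1mem ω⟩, ⟨X2 ω, hX2mem ω⟩, Δ ω), ?_, ?_⟩
        · have hYω : (fun i => (X1 ω i, X2 ω i) + Δ ω i) = Y ω := by
            funext i; exact (hY ω i).symm
          show (g ((fun i => (X1 ω i, X2 ω i) + Δ ω i), ⟨X2 ω, hX2mem ω⟩)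
            : Fin n → ZMod 2) ≠ X1 ω
          rw [hYω]; exact hωe
        · simp [hcelldef]
      · rintro ⟨t, hterr, hcell⟩
        simp only [hcelldef, Set.mem_inter_iff, Set.mem_preimage, Set.mem_singleton_iff] at hcell
        obtain ⟨⟨h1, h2⟩, h3⟩ := hcell
        have hYω : Y ω = (fun i => ((t.1 : Fin n → ZMod 2) i, ((t.2.1 : Fin n → ZMod 2)) i)
            + t.2.2 i) := by
          funext i; rw [hY ω i, h1, h2, h3]
        have hsub : (⟨X2 ω, hX2mem ω⟩ : ↥C₂) = t.2.1 := Subtype.ext h2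
        rw [hYω, hsub, h1]
        exact hterr
    have hμE : μ {ω | (g (Y ω, ⟨X2 ω, hX2mem ω⟩) : Fin n → ZMod 2) ≠ X1 ω}
        = ∑ t ∈ Finset.univ.filter err, μ (cell t) := by
      rw [hE]; exact measure_biUnion_finset hdisj (fun t _ => hcellm t)
    rw [hε, hμE, ENNReal.toReal_sum (fun t _ => (measure_lt_top μ _).ne), ← Finset.sum_filter]
    refine Finset.sum_congr rfl fun t _ => ?_
    rw [hcellμ t]
    simp [hpdef, hrdef, hwdef, ENNReal.toReal_mul, ENNReal.toReal_inv, ENNReal.toReal_prod]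
  -- basic arithmetic facts
  have hMne : (M:ℝ) ≠ 0 := Nat.cast_ne_zero.mpr hM.ne'
  have hNne : (N:ℝ) ≠ 0 := Nat.cast_ne_zero.mpr hN.ne'
  have hMpos : (0:ℝ) < M := by exact_mod_cast hM
  have h2M : (0:ℝ) < 2 * M := by linarith
  have hsub1 : ∑ _c : ↥C₁, (M:ℝ)⁻¹ = 1 := by
    rw [Finset.sum_const, Finset.card_univ, hMcard, nsmul_eq_mul]
    field_simp
  have hsub2 : ∑ _c : ↥C₂, (N:ℝ)⁻¹ = 1 := by
    rw [Finset.sum_const, Finset.card_univ, hNcard, nsmul_eq_mul]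
    field_simp
  have hfact : ∀ F : (Fin n → ZMod 2 × ZMod 2) → ℝ,
      (∑ t : ↥C₁ × ↥C₂ × (Fin n → ZMod 2 × ZMod 2), p t * F t.2.2) = ∑ d, r d * F d := by
    intro F
    rw [Fintype.sum_prod_type]
    have h1 : ∀ c₁ : ↥C₁, (∑ x : ↥C₂ × (Fin n → ZMod 2 × ZMod 2), p (c₁, x) * F x.2)
        = (M:ℝ)⁻¹ * ∑ d, r d * F d := by
      intro c₁
      rw [Fintype.sum_prod_type]
      have h2 : ∀ c₂ : ↥C₂, (∑ d, p (c₁, c₂, d) * F d)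
          = (N:ℝ)⁻¹ * ((M:ℝ)⁻¹ * ∑ d, r d * F d) := by
        intro c₂
        simp only [hpdef]
        rw [Finset.mul_sum, Finset.mul_sum]
        exact Finset.sum_congr rfl fun d _ => by ring
      rw [Finset.sum_congr rfl (fun c₂ _ => h2 c₂), Finset.sum_const, Finset.card_univ, hNcard,
        nsmul_eq_mul, ← mul_assoc, mul_inv_cancel₀ hNne, one_mul]
    rw [Finset.sum_congr rfl (fun c₁ _ => h1 c₁), Finset.sum_const, Finset.card_univ, hMcard,
      nsmul_eq_mul, ← mul_assoc, mul_inv_cancel₀ hMne, one_mul]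
  have hp_sum : ∑ t, p t = 1 := by
    have h := hfact (fun _ => 1)
    simpa [hr_sum] using h
  have hp_nonneg : ∀ t, 0 ≤ p t := by
    intro t
    show (0:ℝ) ≤ (M:ℝ)⁻¹ * (N:ℝ)⁻¹ * r t.2.2
    have := hr_nonneg t.2.2
    positivity
  have hq_nonneg : ∀ t, 0 ≤ q t := by
    intro t
    show (0:ℝ) ≤ (N:ℝ)⁻¹ * (if err t then (2 * M : ℝ)⁻¹ else (2:ℝ)⁻¹)
      * ∏ i, ((2:ℝ)⁻¹ * P2 ((t.2.2 i).2))
    refine mul_nonneg (mul_nonneg (by positivity) ?_) ?_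
    · split
      · exact le_of_lt (inv_pos.mpr h2M)
      · norm_num
    · exact Finset.prod_nonneg fun i _ => mul_nonneg (by norm_num) (hP2_nonneg _)
  have hpos : ∀ t, 0 < p t → 0 < q t := by
    intro t ht
    have hrpos : 0 < r t.2.2 := by
      rcases (hr_nonneg t.2.2).lt_or_eq with h | h
      · exact h
      · exfalso
        rw [hpdef] at ht
        simp only [← h, mul_zero] at ht
        exact lt_irrefl 0 ht
    have hwpos : ∀ i, 0 < w (t.2.2 i) := by
      intro i
      rcases (hw_nonneg (t.2.2 i)).lt_or_eq with h | h
      · exact h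
      · exfalso
        have : r t.2.2 = 0 := Finset.prod_eq_zero (Finset.mem_univ i) h.symm
        rw [this] at hrpos
        exact lt_irrefl 0 hrpos
    have hP2pos : ∀ i, 0 < P2 ((t.2.2 i).2) := fun i => lt_of_lt_of_le (hwpos i) (hP2_ge _)
    show (0:ℝ) < (N:ℝ)⁻¹ * (if err t then (2 * M : ℝ)⁻¹ else (2:ℝ)⁻¹)
      * ∏ i, ((2:ℝ)⁻¹ * P2 ((t.2.2 i).2))
    refine mul_pos (mul_pos (by positivity) ?_) ?_
    · split
      · exact inv_pos.mpr h2M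
      · norm_num
    · exact Finset.prod_pos fun i _ => mul_pos (by norm_num) (hP2pos i)
  -- the auxiliary measure is a subprobability
  have hq_sum : ∑ t, q t ≤ 1 := by
    have hc₂bound : ∀ c₂ : ↥C₂, (∑ c₁ : ↥C₁, ∑ d, q (c₁, c₂, d)) ≤ (N:ℝ)⁻¹ := by
      intro c₂
      have inner : ∀ c₁ : ↥C₁, (∑ d, q (c₁, c₂, d))
          = ∑ y : Fin n → ZMod 2 × ZMod 2,
              ((N:ℝ)⁻¹ * (if (g (y, c₂) : Fin n → ZMod 2) ≠ (c₁ : Fin n → ZMod 2)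
                  then (2 * M : ℝ)⁻¹ else (2:ℝ)⁻¹)
                * ∏ i, ((2:ℝ)⁻¹ * P2 ((y i).2 - (c₂ : Fin n → ZMod 2) i))) := by
        intro c₁
        refine Fintype.sum_equiv
          (Equiv.addLeft (fun i => ((c₁ : Fin n → ZMod 2) i, (c₂ : Fin n → ZMod 2) i))) _ _ ?_
        intro d
        show q (c₁, c₂, d) = _
        simp only [hqdef, Equiv.coe_addLeft, Pi.add_apply]
        congr 1
        refine Finset.prod_congr rfl fun i _ => ?_
        congr 1
        show P2 ((d i).2) = P2 (((( (c₁ : Fin n → ZMod 2) i, (c₂ : Fin n → ZMod 2) i) + d i)).2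
          - (c₂ : Fin n → ZMod 2) i)
        congr 1
        rw [Prod.snd_add]
        simp
      have hA : ∀ y, (∑ c₁ : ↥C₁, (if (g (y, c₂) : Fin n → ZMod 2) ≠ (c₁ : Fin n → ZMod 2)
          then (2 * M : ℝ)⁻¹ else (2:ℝ)⁻¹)) ≤ 1 := by
        intro y
        calc ∑ c₁ : ↥C₁, (if (g (y, c₂) : Fin n → ZMod 2) ≠ (c₁ : Fin n → ZMod 2)
              then (2 * M : ℝ)⁻¹ else (2:ℝ)⁻¹)
            ≤ ∑ c₁ : ↥C₁, ((2 * M : ℝ)⁻¹ + if c₁ = g (y, c₂) then (2:ℝ)⁻¹ else 0) := by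
              refine Finset.sum_le_sum fun c₁ _ => ?_
              by_cases h : (g (y, c₂) : Fin n → ZMod 2) ≠ (c₁ : Fin n → ZMod 2)
              · rw [if_pos h, if_neg (fun he => h (by rw [he]))]
                simp
              · rw [if_neg h, if_pos (Subtype.ext (not_ne_iff.mp h).symm)]
                have : (0:ℝ) ≤ (2 * M : ℝ)⁻¹ := le_of_lt (inv_pos.mpr h2M)
                linarith
          _ = (M:ℝ) * (2 * M : ℝ)⁻¹ + (2:ℝ)⁻¹ := by
              rw [Finset.sum_add_distrib, Finset.sum_const, Finset.card_univ, hMcard,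
                nsmul_eq_mul, Finset.sum_ite_eq' Finset.univ (g (y, c₂)) (fun _ => (2:ℝ)⁻¹)]
              simp
          _ ≤ 1 := by
              have h : (M:ℝ) * (2 * M : ℝ)⁻¹ = (2:ℝ)⁻¹ := by
                field_simp
              rw [h]
              norm_num
      have hB : (∑ y : Fin n → ZMod 2 × ZMod 2,
          ∏ i, ((2:ℝ)⁻¹ * P2 ((y i).2 - (c₂ : Fin n → ZMod 2) i))) = 1 := by
        rw [sum_pi_prod (fun (i : Fin n) (s : ZMod 2 × ZMod 2) => (2:ℝ)⁻¹ * P2 (s.2 - (c₂ : Fin n → ZMod 2) i))]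
        refine Finset.prod_eq_one fun i _ => ?_
        rw [Fintype.sum_prod_type]
        calc ∑ a : ZMod 2, ∑ b : ZMod 2, (2:ℝ)⁻¹ * P2 (b - (c₂ : Fin n → ZMod 2) i)
            = ∑ _a : ZMod 2, (2:ℝ)⁻¹ * ∑ b, P2 (b - (c₂ : Fin n → ZMod 2) i) := by
              exact Finset.sum_congr rfl fun a _ => (Finset.mul_sum _ _ _).symm
          _ = ∑ _a : ZMod 2, (2:ℝ)⁻¹ * 1 := by
              refine Finset.sum_congr rfl fun a _ => ?_
              congr 1
              rw [← hP2_sum]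
              exact Equiv.sum_comp (Equiv.subRight ((c₂ : Fin n → ZMod 2) i)) P2
          _ = 1 := by
              rw [Finset.sum_const, Finset.card_univ, nsmul_eq_mul]
              norm_num
      calc ∑ c₁ : ↥C₁, ∑ d, q (c₁, c₂, d)
          = ∑ c₁ : ↥C₁, ∑ y : Fin n → ZMod 2 × ZMod 2,
              ((N:ℝ)⁻¹ * (if (g (y, c₂) : Fin n → ZMod 2) ≠ (c₁ : Fin n → ZMod 2)
                  then (2 * M : ℝ)⁻¹ else (2:ℝ)⁻¹)
                * ∏ i, ((2:ℝ)⁻¹ * P2 ((y i).2 - (c₂ : Fin n → ZMod 2) i))) :=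
            Finset.sum_congr rfl fun c₁ _ => inner c₁
        _ = ∑ y : Fin n → ZMod 2 × ZMod 2, ∑ c₁ : ↥C₁,
              ((N:ℝ)⁻¹ * (if (g (y, c₂) : Fin n → ZMod 2) ≠ (c₁ : Fin n → ZMod 2)
                  then (2 * M : ℝ)⁻¹ else (2:ℝ)⁻¹)
                * ∏ i, ((2:ℝ)⁻¹ * P2 ((y i).2 - (c₂ : Fin n → ZMod 2) i))) := Finset.sum_comm
        _ ≤ ∑ y : Fin n → ZMod 2 × ZMod 2,
              ((N:ℝ)⁻¹ * ∏ i, ((2:ℝ)⁻¹ * P2 ((y i).2 - (c₂ : Fin n → ZMod 2) i))) := by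
            refine Finset.sum_le_sum fun y _ => ?_
            have hBnn : (0:ℝ) ≤ ∏ i, ((2:ℝ)⁻¹ * P2 ((y i).2 - (c₂ : Fin n → ZMod 2) i)) :=
              Finset.prod_nonneg fun i _ => mul_nonneg (by norm_num) (hP2_nonneg _)
            have e1 : ∑ c₁ : ↥C₁,
                ((N:ℝ)⁻¹ * (if (g (y, c₂) : Fin n → ZMod 2) ≠ (c₁ : Fin n → ZMod 2)
                    then (2 * M : ℝ)⁻¹ else (2:ℝ)⁻¹)
                  * ∏ i, ((2:ℝ)⁻¹ * P2 ((y i).2 - (c₂ : Fin n → ZMod 2) i)))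
                = ((N:ℝ)⁻¹ * ∏ i, ((2:ℝ)⁻¹ * P2 ((y i).2 - (c₂ : Fin n → ZMod 2) i)))
                  * ∑ c₁ : ↥C₁, (if (g (y, c₂) : Fin n → ZMod 2) ≠ (c₁ : Fin n → ZMod 2)
                      then (2 * M : ℝ)⁻¹ else (2:ℝ)⁻¹) := by
              rw [Finset.mul_sum]
              exact Finset.sum_congr rfl fun c₁ _ => by ring
            rw [e1]
            calc ((N:ℝ)⁻¹ * ∏ i, ((2:ℝ)⁻¹ * P2 ((y i).2 - (c₂ : Fin n → ZMod 2) i)))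
                  * ∑ c₁ : ↥C₁, (if (g (y, c₂) : Fin n → ZMod 2) ≠ (c₁ : Fin n → ZMod 2)
                      then (2 * M : ℝ)⁻¹ else (2:ℝ)⁻¹)
                ≤ ((N:ℝ)⁻¹ * ∏ i, ((2:ℝ)⁻¹ * P2 ((y i).2 - (c₂ : Fin n → ZMod 2) i))) * 1 := by
                  refine mul_le_mul_of_nonneg_left (hA y) ?_
                  positivity
              _ = (N:ℝ)⁻¹ * ∏ i, ((2:ℝ)⁻¹ * P2 ((y i).2 - (c₂ : Fin n → ZMod 2) i)) := mul_one _
        _ = (N:ℝ)⁻¹ := by rw [← Finset.mul_sum, hB, mul_one]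
    have e1 : ∑ t, q t = ∑ c₂ : ↥C₂, ∑ c₁ : ↥C₁, ∑ d, q (c₁, c₂, d) := by
      rw [Fintype.sum_prod_type]
      simp_rw [Fintype.sum_prod_type]
      exact Finset.sum_comm
    rw [e1]
    calc ∑ c₂ : ↥C₂, ∑ c₁ : ↥C₁, ∑ d, q (c₁, c₂, d) ≤ ∑ _c₂ : ↥C₂, (N:ℝ)⁻¹ :=
          Finset.sum_le_sum fun c₂ _ => hc₂bound c₂
      _ = 1 := hsub2
  -- S1 : ∑ p log p
  have htensor1 := tensor_sum (n := n) w (fun s => Real.log (w s)) hw_sum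
  have htensor2 := tensor_sum (n := n) w
    (fun s => -Real.log 2 + Real.log (P2 s.2)) hw_sum
  have hS1 : ∑ t, p t * Real.log (p t)
      = -Real.log M - Real.log N + (n : ℝ) * ∑ s, w s * Real.log (w s) := by
    have step : ∀ t, p t * Real.log (p t)
        = p t * (-Real.log M - Real.log N) + p t * (∑ j, Real.log (w (t.2.2 j))) := by
      intro t
      rcases eq_or_ne (p t) 0 with h | h
      · rw [h]; ring
      · rw [← mul_add]
        congr 1
        have hrne : r t.2.2 ≠ 0 := by
          intro h'
          exact h (by simp [hpdef, h'])
        have hwne : ∀ j, w (t.2.2 j) ≠ 0 := fun j h' =>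
          hrne (Finset.prod_eq_zero (Finset.mem_univ j) h')
        show Real.log ((M:ℝ)⁻¹ * (N:ℝ)⁻¹ * r t.2.2) = _
        rw [Real.log_mul (mul_ne_zero (inv_ne_zero hMne) (inv_ne_zero hNne)) hrne,
          Real.log_mul (inv_ne_zero hMne) (inv_ne_zero hNne), Real.log_inv, Real.log_inv,
          show r t.2.2 = ∏ j, w (t.2.2 j) from rfl,
          Real.log_prod (fun j _ => hwne j)]
        ring
    calc ∑ t, p t * Real.log (p t)
        = ∑ t, (p t * (-Real.log M - Real.log N) + p t * (∑ j, Real.log (w (t.2.2 j)))) :=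
          Finset.sum_congr rfl fun t _ => step t
      _ = (∑ t, p t) * (-Real.log M - Real.log N)
          + ∑ t, p t * (∑ j, Real.log (w (t.2.2 j))) := by
          rw [Finset.sum_add_distrib, Finset.sum_mul]
      _ = -Real.log M - Real.log N + (n : ℝ) * ∑ s, w s * Real.log (w s) := by
          rw [hp_sum, one_mul, hfact (fun d => ∑ j, Real.log (w (d j)))]
          simp only [hrdef]
          rw [htensor1]
  -- S2 : ∑ p log q
  have hS2 : ∑ t, p t * Real.log (q t)
      = -Real.log N - Real.log 2 - ε * Real.log M
        + (n : ℝ) * (-Real.log 2 + ∑ s, w s * Real.log (P2 s.2)) := by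
    have step : ∀ t, p t * Real.log (q t)
        = p t * (-Real.log N) + ((if err t then p t * (-Real.log 2 - Real.log M)
            else p t * (-Real.log 2)))
          + p t * (∑ j, (-Real.log 2 + Real.log (P2 ((t.2.2 j).2)))) := by
      intro t
      rcases eq_or_ne (p t) 0 with h | h
      · rw [h]; simp
      · have hrne : r t.2.2 ≠ 0 := by
          intro h'
          exact h (by simp [hpdef, h'])
        have hwne : ∀ j, w (t.2.2 j) ≠ 0 := fun j h' =>
          hrne (Finset.prod_eq_zero (Finset.mem_univ j) h')
        have hP2pos : ∀ j, 0 < P2 ((t.2.2 j).2) := fun j =>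
          lt_of_lt_of_le (lt_of_le_of_ne (hw_nonneg _) (Ne.symm (hwne j))) (hP2_ge _)
        have hprodne : ∀ i ∈ Finset.univ, ((2:ℝ)⁻¹ * P2 ((t.2.2 i).2)) ≠ 0 := by
          intro i _
          have := hP2pos i
          positivity
        have hitene : (if err t then (2 * M : ℝ)⁻¹ else (2:ℝ)⁻¹) ≠ 0 := by
          split
          · exact inv_ne_zero (ne_of_gt h2M)
          · norm_num
        have hqlog : Real.log (q t)
            = -Real.log N + (if err t then (-Real.log 2 - Real.log M) else -Real.log 2)
              + ∑ j, (-Real.log 2 + Real.log (P2 ((t.2.2 j).2))) := by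
          show Real.log ((N:ℝ)⁻¹ * (if err t then (2 * M : ℝ)⁻¹ else (2:ℝ)⁻¹)
            * ∏ i, ((2:ℝ)⁻¹ * P2 ((t.2.2 i).2))) = _
          rw [Real.log_mul (mul_ne_zero (inv_ne_zero hNne) hitene)
              (Finset.prod_ne_zero_iff.mpr hprodne),
            Real.log_mul (inv_ne_zero hNne) hitene,
            Real.log_prod hprodne, Real.log_inv]
          congr 2
          · split
            · rw [Real.log_inv, Real.log_mul (by norm_num) hMne]
              ring
            · rw [Real.log_inv]
          · funext j
            rw [Real.log_mul (by norm_num) (hP2pos j).ne', Real.log_inv]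
        rw [hqlog]
        by_cases he : err t
        · rw [if_pos he, if_pos he]
          ring
        · rw [if_neg he, if_neg he]
          ring
    calc ∑ t, p t * Real.log (q t)
        = ∑ t, (p t * (-Real.log N) + ((if err t then p t * (-Real.log 2 - Real.log M)
              else p t * (-Real.log 2)))
            + p t * (∑ j, (-Real.log 2 + Real.log (P2 ((t.2.2 j).2))))) :=
          Finset.sum_congr rfl fun t _ => step t
      _ = (∑ t, p t) * (-Real.log N)
          + ∑ t, ((if err t then p t * (-Real.log 2 - Real.log M) else p t * (-Real.log 2)))
          + ∑ t, p t * (∑ j, (-Real.log 2 + Real.log (P2 ((t.2.2 j).2)))) := by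
          rw [Finset.sum_add_distrib, Finset.sum_add_distrib, Finset.sum_mul]
      _ = -Real.log N - Real.log 2 - ε * Real.log M
          + (n : ℝ) * (-Real.log 2 + ∑ s, w s * Real.log (P2 s.2)) := by
          have hmid : ∑ t, ((if err t then p t * (-Real.log 2 - Real.log M)
              else p t * (-Real.log 2)))
              = (∑ t, p t) * (-Real.log 2) + (∑ t, (if err t then p t else 0)) * (-Real.log M) := by
            have e : ∀ t, ((if err t then p t * (-Real.log 2 - Real.log M)
                else p t * (-Real.log 2)))
                = p t * (-Real.log 2) + (if err t then p t else 0) * (-Real.log M) := by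
              intro t
              by_cases he : err t
              · rw [if_pos he, if_pos he]; ring
              · rw [if_neg he, if_neg he]; ring
            rw [Finset.sum_congr rfl fun t _ => e t, Finset.sum_add_distrib, ← Finset.sum_mul,
              ← Finset.sum_mul]
          rw [hmid, hp_sum, ← hεsum, hfact (fun d => ∑ j, (-Real.log 2
            + Real.log (P2 ((d j).2))))]
          simp only [hrdef]
          rw [htensor2]
          have hws : ∑ s : ZMod 2 × ZMod 2, w s * (-Real.log 2 + Real.log (P2 s.2))
              = -Real.log 2 + ∑ s : ZMod 2 × ZMod 2, w s * Real.log (P2 s.2) := by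
            have : ∀ s : ZMod 2 × ZMod 2, w s * (-Real.log 2 + Real.log (P2 s.2))
                = w s * (-Real.log 2) + w s * Real.log (P2 s.2) := fun s => by ring
            rw [Finset.sum_congr rfl fun s _ => this s, Finset.sum_add_distrib,
              ← Finset.sum_mul, hw_sum]
            ring
          rw [hws]
          ring
  -- Gibbs' inequality
  have hgibbs := gibbs_aux p q hp_nonneg hq_nonneg hpos (hq_sum.trans hp_sum.symm.le)
  have hdiff : ∑ t, p t * (Real.log (q t) - Real.log (p t))
      = (∑ t, p t * Real.log (q t)) - ∑ t, p t * Real.log (p t) := by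
    rw [← Finset.sum_sub_distrib]
    exact Finset.sum_congr rfl fun t _ => by ring
  rw [hdiff, hS1, hS2] at hgibbs
  -- identify the conditional entropy
  have hV : ∑ s : ZMod 2 × ZMod 2, w s * Real.log (P2 s.2)
      = ∑ b : ZMod 2, P2 b * Real.log (P2 b) := by
    rw [Fintype.sum_prod_type, Finset.sum_comm]
    refine Finset.sum_congr rfl fun b _ => ?_
    show ∑ a : ZMod 2, w (a, b) * Real.log (P2 b) = P2 b * Real.log (P2 b)
    rw [← Finset.sum_mul]
  have hdCE : distCondEntropyFst P
      = -(∑ s, w s * Real.log (w s)) + ∑ s, w s * Real.log (P2 s.2) := by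
    rw [distCondEntropyFst, distEntropy]
    have h1 : ∑ s : ZMod 2 × ZMod 2, Real.negMulLog (P s).toReal
        = -(∑ s, w s * Real.log (w s)) := by
      rw [← Finset.sum_neg_distrib]
      exact Finset.sum_congr rfl fun s _ => by simp [Real.negMulLog, hwdef]
    have h2 : ∑ b : ZMod 2, Real.negMulLog (∑ a : ZMod 2, P (a, b)).toReal
        = -(∑ b : ZMod 2, P2 b * Real.log (P2 b)) := by
      rw [← Finset.sum_neg_distrib]
      refine Finset.sum_congr rfl fun b _ => ?_
      have h3 : (∑ a : ZMod 2, P (a, b)).toReal = P2 b := by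
        rw [ENNReal.toReal_sum (fun a _ => P.apply_ne_top _)]
      rw [h3]
      simp [Real.negMulLog]
    rw [h1, h2, hV]
    ring
  rw [hdCE]
  have hgoal : (1 - ε) * Real.log M = Real.log M - ε * Real.log M := by ring
  rw [show Real.log (Nat.card ↥C₁ : ℝ) = Real.log (M : ℝ) from rfl]
  nlinarith [hgibbs]
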